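/- Lipschitz property of the Skorohod-map drift: fix T > 0, n ≥ 1, v ∈ ℝ, K ≥ 0, and let f = (f₁,…,f_n) and g = (g₁,…,g_n) be continuous functions on [0,T]. Let (I_f, V_f) and (I_g, V_g) be the solutions of the Skorohod system for (f, v, K) and (g, v, K) respectively. If ‖f − g‖_{[0,T]} < η, then ‖I_f − I_g‖_{[0,T]} ≤ (K η / n) T exp(K T). -/

import Mathlib

open Set MeasureTheory

/-- The Skorohod reflection term: `m_f(t) = sup_{0 ≤ s ≤ t} max(-f(s), 0)`. -/
noncomputable def mf (f : ℝ → ℝ) (t : ℝ) : ℝ :=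
  sSup ((fun s => max (-f s) 0) '' Set.Icc 0 t)

/-- The supremum norm of `h` over `[a,b]`: `‖h‖_{[a,b]} = sup_{t ∈ [a,b]} |h(t)|`. -/
noncomputable def supNorm (h : ℝ → ℝ) (a b : ℝ) : ℝ :=
  sSup ((fun t => |h t|) '' Set.Icc a b)

/-- `(I, V)` is a solution of the multiparticle Skorohod system for data `(f, v, K)`:
with `m_i(t) = sup_{0 ≤ s ≤ t} max(-(f_i(s) + I(s)), 0)`, one has
`V(t) = -v + (K/n) ∑ᵢ m_i(t)` and `I(t) = ∫₀ᵗ V(s) ds` on `[0,T]`. -/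
def IsSkorohodSystemSol (T : ℝ) (n : ℕ) (f : Fin n → ℝ → ℝ) (v K : ℝ)
    (I V : ℝ → ℝ) : Prop :=
  ContinuousOn I (Set.Icc 0 T) ∧ ContinuousOn V (Set.Icc 0 T) ∧
  (∀ t ∈ Set.Icc 0 T,
    V t = -v + (K / (n : ℝ)) * ∑ i, mf (fun s => f i s + I s) t) ∧
  (∀ t ∈ Set.Icc 0 T, I t = ∫ s in (0:ℝ)..t, V s)

lemma abs_le_supNorm {h : ℝ → ℝ} {a b s : ℝ} (hcont : ContinuousOn h (Icc a b))
    (hs : s ∈ Icc a b) : |h s| ≤ supNorm h a b :=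
  le_csSup ((isCompact_Icc.image_of_continuousOn
    (continuous_abs.comp_continuousOn hcont)).bddAbove) ⟨s, hs, rfl⟩

lemma supNorm_nonneg {h : ℝ → ℝ} {a b : ℝ} (hcont : ContinuousOn h (Icc a b))
    (hab : a ≤ b) : 0 ≤ supNorm h a b :=
  (abs_nonneg _).trans (abs_le_supNorm hcont ⟨le_rfl, hab⟩)

lemma mf_le_aux {u w : ℝ → ℝ} {t c : ℝ} (ht : 0 ≤ t)
    (hw : ContinuousOn w (Icc 0 t)) (hc0 : 0 ≤ c)
    (hc : ∀ s ∈ Icc 0 t, -u s ≤ -w s + c) :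
    mf u t ≤ mf w t + c := by
  have hbdd : BddAbove ((fun s => max (-w s) 0) '' Icc 0 t) :=
    (isCompact_Icc.image_of_continuousOn ((continuous_neg.max continuous_const).comp_continuousOn hw)).bddAbove
  have h0 : (0:ℝ) ≤ mf w t :=
    le_trans (le_max_right (-w 0) 0) (le_csSup hbdd ⟨0, ⟨le_rfl, ht⟩, rfl⟩)
  refine Real.sSup_le ?_ (by linarith)
  rintro y ⟨s, hs, rfl⟩
  have h1 : max (-w s) 0 ≤ mf w t := le_csSup hbdd ⟨s, hs, rfl⟩
  have h2 := hc s hs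
  have h3 : max (-u s) 0 ≤ max (-w s) 0 + c :=
    max_le (by linarith [le_max_left (-w s) (0:ℝ)])
      (by linarith [le_max_right (-w s) (0:ℝ)])
  linarith

lemma abs_mf_sub_le {u w : ℝ → ℝ} {t c : ℝ} (ht : 0 ≤ t)
    (hu : ContinuousOn u (Icc 0 t)) (hw : ContinuousOn w (Icc 0 t))
    (hc : ∀ s ∈ Icc 0 t, |u s - w s| ≤ c) :
    |mf u t - mf w t| ≤ c := by
  have hc0 : 0 ≤ c := (abs_nonneg _).trans (hc 0 ⟨le_rfl, ht⟩)
  rw [abs_sub_le_iff]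
  constructor
  · have := mf_le_aux (u := u) ht hw hc0 (fun s hs => by
      have := hc s hs; rw [abs_le] at this; linarith [this.2])
    linarith
  · have := mf_le_aux (u := w) ht hu hc0 (fun s hs => by
      have := hc s hs; rw [abs_le] at this; linarith [this.1])
    linarith

lemma gronwallBound_le_aux {Kc ε T : ℝ} (hK : 0 ≤ Kc) (hε : 0 ≤ ε) (hT : 0 ≤ T) :
    gronwallBound 0 Kc ε T ≤ ε * T * Real.exp (Kc * T) := by
  rcases eq_or_ne Kc 0 with h | h
  · subst h
    rw [gronwallBound_K0]
    simp only [zero_mul, Real.exp_zero, mul_one, zero_add, le_refl]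
  · have hKpos : 0 < Kc := lt_of_le_of_ne hK (Ne.symm h)
    rw [gronwallBound_of_K_ne_0 h]
    have hexp : Real.exp (-(Kc * T)) * Real.exp (Kc * T) = 1 := by
      rw [← Real.exp_add]; simp
    have h1 : Real.exp (Kc * T) - 1 ≤ Kc * T * Real.exp (Kc * T) := by
      nlinarith [Real.add_one_le_exp (-(Kc * T)), Real.exp_pos (Kc * T)]
    have h2 : ε / Kc * (Real.exp (Kc * T) - 1) ≤ ε / Kc * (Kc * T * Real.exp (Kc * T)) :=
      mul_le_mul_of_nonneg_left h1 (div_nonneg hε hK)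
    have h3 : ε / Kc * (Kc * T * Real.exp (Kc * T)) = ε * T * Real.exp (Kc * T) := by
      field_simp
    nlinarith

/-- Lipschitz property of the Skorohod-map drift: if `‖f - g‖_{[0,T]} < η`, then
`‖I_f - I_g‖_{[0,T]} ≤ (Kη/n) T exp(KT)`. -/
theorem stmt_9 (T : ℝ) (hT : 0 < T) (n : ℕ) (hn : 1 ≤ n)
    (v K : ℝ) (hK : 0 ≤ K)
    (f g : Fin n → ℝ → ℝ)
    (hf : ∀ i, ContinuousOn (f i) (Set.Icc 0 T))
    (hg : ∀ i, ContinuousOn (g i) (Set.Icc 0 T))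
    (If Vf Ig Vg : ℝ → ℝ)
    (hsolf : IsSkorohodSystemSol T n f v K If Vf)
    (hsolg : IsSkorohodSystemSol T n g v K Ig Vg)
    (η : ℝ)
    (hη : (∑ i, supNorm (fun t => f i t - g i t) 0 T) < η) :
    supNorm (fun t => If t - Ig t) 0 T ≤ (K * η / (n : ℝ)) * T * Real.exp (K * T) := by
  obtain ⟨hIf, hVf, hVfEq, hIfEq⟩ := hsolf
  obtain ⟨hIg, hVg, hVgEq, hIgEq⟩ := hsolg
  have hn0 : (0:ℝ) < (n:ℝ) := by exact_mod_cast Nat.lt_of_lt_of_le Nat.zero_lt_one hn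
  set W : ℝ → ℝ := fun t => Vf t - Vg t with hWdef
  have hWcont : ContinuousOn W (Icc 0 T) := hVf.sub hVg
  have hAcont : ContinuousOn (fun t => |W t|) (Icc 0 T) :=
    continuous_abs.comp_continuousOn hWcont
  set ψ : ℝ → ℝ := fun t => ∫ s in (0:ℝ)..t, |W s| with hψdef
  have hint : ∀ t ∈ Icc (0:ℝ) T, IntervalIntegrable (fun s => |W s|) volume 0 t := by
    intro t ht
    exact (hAcont.mono (by rw [uIcc_of_le ht.1]; exact Icc_subset_Icc le_rfl ht.2)).intervalIntegrable
  have hintV : ∀ (V : ℝ → ℝ), ContinuousOn V (Icc 0 T) → ∀ t ∈ Icc (0:ℝ) T,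
      IntervalIntegrable V volume 0 t := by
    intro V hV t ht
    exact (hV.mono (by rw [uIcc_of_le ht.1]; exact Icc_subset_Icc le_rfl ht.2)).intervalIntegrable
  have hψcont : ContinuousOn ψ (Icc 0 T) := by
    have := intervalIntegral.continuousOn_primitive_interval'
      (hint T ⟨hT.le, le_rfl⟩) (left_mem_uIcc)
    rwa [uIcc_of_le hT.le] at this
  have hψ_nonneg : ∀ t ∈ Icc (0:ℝ) T, 0 ≤ ψ t := fun t ht =>
    intervalIntegral.integral_nonneg ht.1 (fun s _ => abs_nonneg _)
  -- |If s - Ig s| ≤ ψ t for all s ∈ [0,t]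
  have hD : ∀ t ∈ Icc (0:ℝ) T, ∀ s ∈ Icc (0:ℝ) t, |If s - Ig s| ≤ ψ t := by
    intro t ht s hs
    have hsT : s ∈ Icc (0:ℝ) T := ⟨hs.1, hs.2.trans ht.2⟩
    rw [hIfEq s hsT, hIgEq s hsT,
      ← intervalIntegral.integral_sub (hintV Vf hVf s hsT) (hintV Vg hVg s hsT)]
    calc |∫ u in (0:ℝ)..s, W u| ≤ ∫ u in (0:ℝ)..s, |W u| :=
          intervalIntegral.abs_integral_le_integral_abs hs.1
      _ ≤ ψ t := intervalIntegral.integral_mono_interval le_rfl hs.1 hs.2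
          (Filter.Eventually.of_forall (fun u => abs_nonneg _)) (hint t ht)
  -- key pointwise bound
  have hη0 : 0 ≤ ∑ i, supNorm (fun t => f i t - g i t) 0 T :=
    Finset.sum_nonneg fun i _ => supNorm_nonneg ((hf i).sub (hg i)) hT.le
  have hηpos : 0 < η := lt_of_le_of_lt hη0 hη
  have hbound : ∀ t ∈ Icc (0:ℝ) T, |W t| ≤ K * ψ t + K * η / (n:ℝ) := by
    intro t ht
    have hWt : W t = (K / (n:ℝ)) *
        (∑ i, (mf (fun s => f i s + If s) t - mf (fun s => g i s + Ig s) t)) := by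
      simp only [hWdef]
      rw [hVfEq t ht, hVgEq t ht, Finset.sum_sub_distrib]
      ring
    have hsub : Icc (0:ℝ) t ⊆ Icc (0:ℝ) T := Icc_subset_Icc le_rfl ht.2
    have hterm : ∀ i : Fin n,
        |mf (fun s => f i s + If s) t - mf (fun s => g i s + Ig s) t| ≤
          supNorm (fun s => f i s - g i s) 0 T + ψ t := by
      intro i
      refine abs_mf_sub_le ht.1 (((hf i).mono hsub).add (hIf.mono hsub))
        (((hg i).mono hsub).add (hIg.mono hsub)) ?_
      intro s hs
      have h1 : |f i s - g i s| ≤ supNorm (fun s => f i s - g i s) 0 T :=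
        abs_le_supNorm ((hf i).sub (hg i)) (hsub hs)
      have h2 : |If s - Ig s| ≤ ψ t := hD t ht s hs
      calc |(f i s + If s) - (g i s + Ig s)| = |(f i s - g i s) + (If s - Ig s)| := by ring_nf
        _ ≤ |f i s - g i s| + |If s - Ig s| := abs_add_le _ _
        _ ≤ _ := add_le_add h1 h2
    have hsum : |∑ i, (mf (fun s => f i s + If s) t - mf (fun s => g i s + Ig s) t)| ≤
        (∑ i, supNorm (fun s => f i s - g i s) 0 T) + (n:ℝ) * ψ t := by
      calc |∑ i, (mf (fun s => f i s + If s) t - mf (fun s => g i s + Ig s) t)|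
          ≤ ∑ i, |mf (fun s => f i s + If s) t - mf (fun s => g i s + Ig s) t| :=
            Finset.abs_sum_le_sum_abs _ _
        _ ≤ ∑ i : Fin n, (supNorm (fun s => f i s - g i s) 0 T + ψ t) :=
            Finset.sum_le_sum (fun i _ => hterm i)
        _ = (∑ i, supNorm (fun s => f i s - g i s) 0 T) + (n:ℝ) * ψ t := by
            rw [Finset.sum_add_distrib]
            simp [mul_comm]
    have hKn : 0 ≤ K / (n:ℝ) := div_nonneg hK hn0.le
    calc |W t| = (K / (n:ℝ)) *
          |∑ i, (mf (fun s => f i s + If s) t - mf (fun s => g i s + Ig s) t)| := by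
          rw [hWt, abs_mul, abs_of_nonneg hKn]
      _ ≤ (K / (n:ℝ)) * ((∑ i, supNorm (fun s => f i s - g i s) 0 T) + (n:ℝ) * ψ t) :=
          mul_le_mul_of_nonneg_left hsum hKn
      _ ≤ (K / (n:ℝ)) * (η + (n:ℝ) * ψ t) := by
          have := hψ_nonneg t ht
          apply mul_le_mul_of_nonneg_left _ hKn
          linarith
      _ = K * ψ t + K * η / (n:ℝ) := by field_simp; ring
  -- Gronwall
  have hderiv : ∀ t ∈ Ico (0:ℝ) T, HasDerivWithinAt ψ (|W t|) (Ici t) t := by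
    intro t ht
    have htT : t ∈ Icc (0:ℝ) T := ⟨ht.1, ht.2.le⟩
    have hmem : Icc (0:ℝ) T ∈ nhdsWithin t (Ioi t) := Icc_mem_nhdsGT_of_mem ht
    refine intervalIntegral.integral_hasDerivWithinAt_right (hint t htT)
      ⟨Icc 0 T, hmem, hAcont.aestronglyMeasurable measurableSet_Icc⟩ ?_
    exact (hAcont t htT).mono_of_mem_nhdsWithin hmem
  have hgron := norm_le_gronwallBound_of_norm_deriv_right_le (f := ψ)
    (f' := fun t => |W t|) (δ := 0) (K := K) (ε := K * η / (n:ℝ)) (a := 0) (b := T)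
    hψcont hderiv (by simp [hψdef]) ?_ T ⟨hT.le, le_rfl⟩
  · have hψT : ψ T ≤ gronwallBound 0 K (K * η / (n:ℝ)) T := by
      have h0 := hψ_nonneg T ⟨hT.le, le_rfl⟩
      rw [Real.norm_eq_abs, abs_of_nonneg h0, sub_zero] at hgron
      exact hgron
    have hgb : gronwallBound 0 K (K * η / (n:ℝ)) T ≤
        (K * η / (n:ℝ)) * T * Real.exp (K * T) :=
      gronwallBound_le_aux hK (by positivity) hT.le
    refine Real.sSup_le ?_ ?_
    · rintro y ⟨s, hs, rfl⟩
      exact le_trans (le_trans (hD T ⟨hT.le, le_rfl⟩ s hs) hψT) hgb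
    · exact le_trans (le_trans (hψ_nonneg T ⟨hT.le, le_rfl⟩) hψT) hgb
  · intro t ht
    have htT : t ∈ Icc (0:ℝ) T := ⟨ht.1, ht.2.le⟩
    rw [Real.norm_eq_abs, Real.norm_eq_abs, abs_abs, abs_of_nonneg (hψ_nonneg t htT)]
    exact hbound t htT
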